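/- Let 𝕂 be a field, n, k ∈ ℕ, and let I be a proper ideal of the polynomial algebra 𝕂[X_1,…,X_n] (= MvPolynomial (Fin n) 𝕂) containing the k-th power of the ideal 𝔪 generated by the variables X_1,…,X_n. Then the quotient 𝕂-algebra 𝕂[X_1,…,X_n]/I is finite-dimensional over 𝕂, and every element of the quotient differs from a scalar multiple of the identity by a nilpotent element; in other words, 𝕂[X_1,…,X_n]/I is a Weil algebra over 𝕂. -/

import Mathlib

open MvPolynomial


lemma prod_pow_mem_pow_sum {R ι : Type*} [CommRing R] (J : Ideal R) (s : Finset ι)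
    (f : ι → R) (e : ι → ℕ) (hf : ∀ i ∈ s, f i ∈ J) :
    ∏ i ∈ s, f i ^ e i ∈ J ^ (∑ i ∈ s, e i) := by
  classical
  induction s using Finset.induction_on with
  | empty => simp [Ideal.one_eq_top]
  | @insert a t hat ih =>
    rw [Finset.prod_insert hat, Finset.sum_insert hat, pow_add]
    exact Ideal.mul_mem_mul (Ideal.pow_mem_pow (hf a (Finset.mem_insert_self a t)) _)
      (ih fun i hi => hf i (Finset.mem_insert_of_mem hi))

lemma monomial_mem_pow {𝕂 : Type*} [Field 𝕂] {n k : ℕ} (m : Fin n →₀ ℕ) (c : 𝕂)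
    (hm : k ≤ m.sum fun _ e => e) :
    MvPolynomial.monomial m c ∈
      (Ideal.span (Set.range (MvPolynomial.X : Fin n → MvPolynomial (Fin n) 𝕂))) ^ k := by
  set 𝔪 := Ideal.span (Set.range (MvPolynomial.X : Fin n → MvPolynomial (Fin n) 𝕂))
  have h1 : (m.prod fun i e => (X i : MvPolynomial (Fin n) 𝕂) ^ e) ∈ 𝔪 ^ (m.sum fun _ e => e) := by
    rw [Finsupp.prod, Finsupp.sum]
    exact prod_pow_mem_pow_sum 𝔪 m.support _ _
      fun i _ => Ideal.subset_span (Set.mem_range_self i)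
  have h2 := Ideal.pow_le_pow_right hm h1
  rw [monomial_eq]
  exact Ideal.mul_mem_left _ _ h2

lemma finite_le_finsupp {n k : ℕ} : {m : Fin n →₀ ℕ | (m.sum fun _ e => e) ≤ k}.Finite := by
  apply Set.Finite.subset (Set.finite_Icc (0 : Fin n →₀ ℕ)
    (Finsupp.equivFunOnFinite.symm fun _ => k))
  intro m hm
  simp only [Set.mem_Icc, Finsupp.le_def]
  refine ⟨fun i => Nat.zero_le _, fun i => ?_⟩
  refine le_trans ?_ hm
  by_cases h : i ∈ m.support
  · exact Finset.single_le_sum (f := fun j => m j) (fun _ _ => Nat.zero_le _) h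
  · simp [Finsupp.notMem_support_iff.mp h]




/-- If `I` is a proper ideal of `𝕂[X_1,…,X_n]` containing a power `𝔪^k` of the ideal `𝔪`
generated by the variables, then `𝕂[X_1,…,X_n]/I` is a Weil algebra over `𝕂`: it is
nontrivial, finite-dimensional, and every element differs from a scalar by a nilpotent. -/
theorem polynomial_quotient_is_weil_algebra {𝕂 : Type*} [Field 𝕂] {n k : ℕ}
    (I : Ideal (MvPolynomial (Fin n) 𝕂)) (hI : I ≠ ⊤)
    (hk : (Ideal.span (Set.range (MvPolynomial.X : Fin n → MvPolynomial (Fin n) 𝕂))) ^ k ≤ I) :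
    Nontrivial (MvPolynomial (Fin n) 𝕂 ⧸ I) ∧
    FiniteDimensional 𝕂 (MvPolynomial (Fin n) 𝕂 ⧸ I) ∧
    ∀ a : MvPolynomial (Fin n) 𝕂 ⧸ I, ∃ c : 𝕂,
      IsNilpotent (a - algebraMap 𝕂 (MvPolynomial (Fin n) 𝕂 ⧸ I) c) := by
  classical
  set 𝔪 := Ideal.span (Set.range (MvPolynomial.X : Fin n → MvPolynomial (Fin n) 𝕂)) with h𝔪
  refine ⟨Ideal.Quotient.nontrivial_iff.mpr hI, ?_, ?_⟩
  · -- finite dimensional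
    have hfin : Module.Finite 𝕂 (restrictTotalDegree (Fin n) 𝕂 k) := by
      have : Finite {m : Fin n →₀ ℕ | (m.sum fun _ e => e) ≤ k} := finite_le_finsupp
      exact Module.Finite.of_basis (basisRestrictSupport 𝕂 _)
    let f : restrictTotalDegree (Fin n) 𝕂 k →ₗ[𝕂] MvPolynomial (Fin n) 𝕂 ⧸ I :=
      (Ideal.Quotient.mkₐ 𝕂 I).toLinearMap.comp (Submodule.subtype _)
    have hsurj : Function.Surjective f := by
      intro a
      obtain ⟨p, rfl⟩ := Ideal.Quotient.mk_surjective a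
      set q : MvPolynomial (Fin n) 𝕂 :=
        ∑ m ∈ p.support.filter (fun m => (m.sum fun _ e => e) ≤ k), monomial m (p.coeff m) with hq
      have hqmem : q ∈ restrictTotalDegree (Fin n) 𝕂 k := by
        apply Submodule.sum_mem
        intro m hm
        rw [Finset.mem_filter] at hm
        rw [restrictTotalDegree, restrictSupport]
        intro x hx
        have := MvPolynomial.support_monomial_subset (a := p.coeff m) (s := m) hx
        rw [Finset.mem_singleton] at this
        subst this
        exact hm.2
      refine ⟨⟨q, hqmem⟩, ?_⟩
      show Ideal.Quotient.mk I q = Ideal.Quotient.mk I p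
      rw [Ideal.Quotient.eq]
      have hp : p = q + ∑ m ∈ p.support.filter (fun m => ¬ (m.sum fun _ e => e) ≤ k),
          monomial m (p.coeff m) := by
        rw [hq, Finset.sum_filter_add_sum_filter_not, ← as_sum]
      have : q - p = -(∑ m ∈ p.support.filter (fun m => ¬ (m.sum fun _ e => e) ≤ k),
          monomial m (p.coeff m)) := by
        linear_combination -hp
      rw [this]
      apply neg_mem
      apply hk
      apply Submodule.sum_mem
      intro m hm
      rw [Finset.mem_filter] at hm
      exact monomial_mem_pow m _ (le_of_not_ge hm.2)
    exact Module.Finite.of_surjective f hsurj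
  · -- nilpotent part
    intro a
    obtain ⟨p, rfl⟩ := Ideal.Quotient.mk_surjective a
    refine ⟨p.coeff 0, ?_, ?_⟩
    · exact k
    have halg : algebraMap 𝕂 (MvPolynomial (Fin n) 𝕂 ⧸ I) (p.coeff 0)
        = Ideal.Quotient.mk I (C (p.coeff 0)) := rfl
    rw [halg, ← RingHom.map_sub, ← RingHom.map_pow, Ideal.Quotient.eq_zero_iff_mem]
    apply hk
    apply Ideal.pow_mem_pow
    rw [h𝔪, ← Set.image_univ]
    rw [mem_ideal_span_X_image]
    intro m hm
    rw [mem_support_iff] at hm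
    have hm0 : m ≠ 0 := by
      rintro rfl
      apply hm
      simp [coeff_zero]
    obtain ⟨i, hi⟩ := Finsupp.ne_iff.mp hm0
    exact ⟨i, Set.mem_univ i, by simpa using hi⟩
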